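/- Let γ be a positive-negative cycle (eff_b(γ) > 0, eff_u(γ) < 0) of length at most |Q| in a 2-VASS with one unary counter, and let ρ₁ γ Λ γ ρ₂ be a path inducing a valid run from configuration p(u) in which every configuration along the segment γΛγ has unary counter value at least |Q|. Then the path ρ₁ γ γ Λ ρ₂ also induces a valid run from p(u), ending at the same final configuration. -/

import Mathlib

/-- Minimum prefix sum (the empty prefix contributes 0). -/
def pguard (l : List ℤ) : ℤ := (l.inits.map List.sum).foldr min 0

/-- Binary effect of a path given by its labels in ℤ × ℤ. -/
def effb (π : List (ℤ × ℤ)) : ℤ := (π.map Prod.fst).sum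

/-- Unary effect. -/
def effu (π : List (ℤ × ℤ)) : ℤ := (π.map Prod.snd).sum

/-- Binary pguard. -/
def guardb (π : List (ℤ × ℤ)) : ℤ := pguard (π.map Prod.fst)

/-- Unary pguard. -/
def guardu (π : List (ℤ × ℤ)) : ℤ := pguard (π.map Prod.snd)

/-- The run following labels `π` from counter values `u` keeps both counters nonnegative. -/
def ValidFrom (u : ℤ × ℤ) (π : List (ℤ × ℤ)) : Prop :=
  ∀ l ∈ π.inits, 0 ≤ u.1 + effb l ∧ 0 ≤ u.2 + effu l

lemma effb_append (a b : List (ℤ × ℤ)) : effb (a ++ b) = effb a + effb b := by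
  simp [effb]

lemma effu_append (a b : List (ℤ × ℤ)) : effu (a ++ b) = effu a + effu b := by
  simp [effu]

lemma neg_len_le_sum : ∀ (l : List ℤ), (∀ x ∈ l, -1 ≤ x) → -(l.length : ℤ) ≤ l.sum := by
  intro l
  induction l with
  | nil => simp
  | cons a t ih =>
    intro h
    have h1 : -1 ≤ a := h a (by simp)
    have h2 := ih (fun x hx => h x (by simp [hx]))
    simp only [List.length_cons, List.sum_cons]
    push_cast
    linarith

lemma neg_len_le_effu (γ : List (ℤ × ℤ)) (hun : ∀ t ∈ γ, t.2 ∈ ({-1, 0, 1} : Set ℤ)) :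
    -(γ.length : ℤ) ≤ effu γ := by
  have : ∀ x ∈ γ.map Prod.snd, -1 ≤ x := by
    intro x hx
    obtain ⟨t, ht, rfl⟩ := List.mem_map.1 hx
    have h := hun t ht
    simp only [Set.mem_insert_iff, Set.mem_singleton_iff] at h
    rcases h with h | h | h <;> rw [h] <;> norm_num
  have := neg_len_le_sum _ this
  simpa [effu] using this

lemma neg_len_le_effu_take (γ : List (ℤ × ℤ)) (k : ℕ)
    (hun : ∀ t ∈ γ, t.2 ∈ ({-1, 0, 1} : Set ℤ)) :
    -(γ.length : ℤ) ≤ effu (γ.take k) := by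
  have h1 := neg_len_le_effu (γ.take k) (fun t ht => hun t (List.mem_of_mem_take ht))
  have h2 : ((γ.take k).length : ℤ) ≤ (γ.length : ℤ) := by
    have : (γ.take k).length ≤ γ.length := by
      rw [List.length_take]; exact min_le_right _ _
    exact_mod_cast this
  linarith

lemma validFrom_iff (u : ℤ × ℤ) (π : List (ℤ × ℤ)) :
    ValidFrom u π ↔ ∀ n : ℕ, 0 ≤ u.1 + effb (π.take n) ∧ 0 ≤ u.2 + effu (π.take n) := by
  constructor
  · intro h n
    exact h _ ((List.mem_inits _ _).2 (List.take_prefix n π))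
  · intro h l hl
    have hpre := (List.mem_inits _ _).1 hl
    rw [List.prefix_iff_eq_take.1 hpre]
    exact h _

/-- reshuffling a positive-negative short cycle earlier past `Λ`
preserves validity and the final configuration. -/
theorem reshuffle_positive_negative {Q : Type*} [Fintype Q] (u : ℤ × ℤ)
    (ρ₁ γ Λ ρ₂ : List (ℤ × ℤ))
    (hlen : γ.length ≤ Fintype.card Q)
    (hun : ∀ t ∈ γ, t.2 ∈ ({-1, 0, 1} : Set ℤ))
    (hposb : 0 < effb γ) (hnegu : effu γ < 0)
    (hvalid : ValidFrom u (ρ₁ ++ γ ++ Λ ++ γ ++ ρ₂))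
    (hseg : ∀ l, ρ₁.length ≤ l → l ≤ ρ₁.length + 2 * γ.length + Λ.length →
      (Fintype.card Q : ℤ) ≤ u.2 + effu ((ρ₁ ++ γ ++ Λ ++ γ ++ ρ₂).take l)) :
    ValidFrom u (ρ₁ ++ γ ++ γ ++ Λ ++ ρ₂) ∧
    effb (ρ₁ ++ γ ++ γ ++ Λ ++ ρ₂) = effb (ρ₁ ++ γ ++ Λ ++ γ ++ ρ₂) ∧
    effu (ρ₁ ++ γ ++ γ ++ Λ ++ ρ₂) = effu (ρ₁ ++ γ ++ Λ ++ γ ++ ρ₂) := by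
  have hvalid' := (validFrom_iff _ _).1 hvalid
  set N : ℤ := (Fintype.card Q : ℤ) with hN
  have hlenZ : (γ.length : ℤ) ≤ N := by rw [hN]; exact_mod_cast hlen
  have hgu : -(γ.length : ℤ) ≤ effu γ := neg_len_le_effu γ hun
  refine ⟨(validFrom_iff _ _).2 ?_, by simp [effb_append]; ring, by simp [effu_append]; ring⟩
  intro n
  -- abbreviations
  have old_take : ∀ k : ℕ, (ρ₁ ++ γ ++ Λ ++ γ ++ ρ₂).take (ρ₁.length + k)
      = ρ₁ ++ (γ ++ Λ ++ γ ++ ρ₂).take k := by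
    intro k
    have e : ρ₁ ++ γ ++ Λ ++ γ ++ ρ₂ = ρ₁ ++ (γ ++ Λ ++ γ ++ ρ₂) := by
      simp [List.append_assoc]
    rw [e, List.take_length_add_append]
  rcases le_or_gt n (ρ₁.length + γ.length) with h1 | h1
  · -- prefix of ρ₁ ++ γ : same in both paths
    have e1 : (ρ₁ ++ γ ++ γ ++ Λ ++ ρ₂).take n = ((ρ₁ ++ γ) ++ (γ ++ Λ ++ ρ₂)).take n := by
      simp [List.append_assoc]
    have e2 : (ρ₁ ++ γ ++ Λ ++ γ ++ ρ₂).take n = ((ρ₁ ++ γ) ++ (Λ ++ γ ++ ρ₂)).take n := by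
      simp [List.append_assoc]
    have hl : n ≤ (ρ₁ ++ γ).length := by simpa using h1
    have : (ρ₁ ++ γ ++ γ ++ Λ ++ ρ₂).take n = (ρ₁ ++ γ ++ Λ ++ γ ++ ρ₂).take n := by
      rw [e1, e2, List.take_append_of_le_length hl, List.take_append_of_le_length hl]
    rw [this]; exact hvalid' n
  rcases le_or_gt n (ρ₁.length + 2 * γ.length) with h2 | h2
  · -- inside the second (moved) γ
    obtain ⟨k, hk, rfl⟩ : ∃ k, k ≤ γ.length ∧ n = (ρ₁ ++ γ).length + k := by
      refine ⟨n - (ρ₁.length + γ.length), by omega, by simp; omega⟩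
    have enew : (ρ₁ ++ γ ++ γ ++ Λ ++ ρ₂).take ((ρ₁ ++ γ).length + k)
        = (ρ₁ ++ γ) ++ γ.take k := by
      have : ρ₁ ++ γ ++ γ ++ Λ ++ ρ₂ = (ρ₁ ++ γ) ++ (γ ++ (Λ ++ ρ₂)) := by
        simp [List.append_assoc]
      rw [this, List.take_length_add_append, List.take_append_of_le_length hk]
    rw [enew]
    constructor
    · -- binary: original validity at ρ₁ ++ γ.take k, plus effb γ > 0
      have hold := (hvalid' (ρ₁.length + k)).1
      rw [old_take] at hold
      have : (γ ++ Λ ++ γ ++ ρ₂).take k = γ.take k := by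
        rw [List.append_assoc, List.append_assoc, List.take_append_of_le_length hk]
      rw [this, effb_append] at hold
      rw [effb_append, effb_append]
      linarith
    · -- unary: hseg at ρ₁.length + γ.length, minus at most γ.length ≤ N
      have hs := hseg (ρ₁.length + γ.length) (by omega) (by omega)
      rw [old_take] at hs
      have : (γ ++ Λ ++ γ ++ ρ₂).take γ.length = γ := by
        rw [List.append_assoc, List.append_assoc,
          List.take_append_of_le_length (le_refl _), List.take_length]
      rw [this, effu_append] at hs
      have htk := neg_len_le_effu_take γ k hun
      rw [effu_append, effu_append]
      linarith
  rcases le_or_gt n (ρ₁.length + 2 * γ.length + Λ.length) with h3 | h3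
  · -- inside Λ
    obtain ⟨k, hk, rfl⟩ : ∃ k, k ≤ Λ.length ∧ n = (ρ₁ ++ γ ++ γ).length + k := by
      refine ⟨n - (ρ₁.length + 2 * γ.length), by omega, by simp; omega⟩
    have enew : (ρ₁ ++ γ ++ γ ++ Λ ++ ρ₂).take ((ρ₁ ++ γ ++ γ).length + k)
        = (ρ₁ ++ γ ++ γ) ++ Λ.take k := by
      have : ρ₁ ++ γ ++ γ ++ Λ ++ ρ₂ = (ρ₁ ++ γ ++ γ) ++ (Λ ++ ρ₂) := by
        simp [List.append_assoc]
      rw [this, List.take_length_add_append, List.take_append_of_le_length hk]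
    rw [enew]
    have hold := hvalid' (ρ₁.length + (γ.length + k))
    rw [old_take] at hold
    have etake : (γ ++ Λ ++ γ ++ ρ₂).take (γ.length + k) = γ ++ Λ.take k := by
      have : γ ++ Λ ++ γ ++ ρ₂ = γ ++ (Λ ++ (γ ++ ρ₂)) := by simp [List.append_assoc]
      rw [this, List.take_length_add_append, List.take_append_of_le_length hk]
    rw [etake] at hold
    constructor
    · have hb := hold.1
      rw [effb_append, effb_append] at hb
      rw [effb_append, effb_append, effb_append]
      linarith
    · have hs := hseg (ρ₁.length + (γ.length + k)) (by omega) (by omega)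
      rw [old_take, etake] at hs
      rw [effu_append, effu_append] at hs
      rw [effu_append, effu_append, effu_append]
      linarith
  · -- inside ρ₂ (or past the end): same multiset of labels
    obtain ⟨k, rfl⟩ : ∃ k, n = (ρ₁ ++ γ ++ γ ++ Λ).length + k := by
      refine ⟨n - (ρ₁.length + 2 * γ.length + Λ.length), by simp; omega⟩
    have enew : (ρ₁ ++ γ ++ γ ++ Λ ++ ρ₂).take ((ρ₁ ++ γ ++ γ ++ Λ).length + k)
        = (ρ₁ ++ γ ++ γ ++ Λ) ++ ρ₂.take k := by
      have : ρ₁ ++ γ ++ γ ++ Λ ++ ρ₂ = (ρ₁ ++ γ ++ γ ++ Λ) ++ ρ₂ := by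
        simp [List.append_assoc]
      rw [this, List.take_length_add_append]
    have eold : (ρ₁ ++ γ ++ Λ ++ γ ++ ρ₂).take ((ρ₁ ++ γ ++ Λ ++ γ).length + k)
        = (ρ₁ ++ γ ++ Λ ++ γ) ++ ρ₂.take k := by
      have : ρ₁ ++ γ ++ Λ ++ γ ++ ρ₂ = (ρ₁ ++ γ ++ Λ ++ γ) ++ ρ₂ := by
        simp [List.append_assoc]
      rw [this, List.take_length_add_append]
    have hold := hvalid' ((ρ₁ ++ γ ++ Λ ++ γ).length + k)
    rw [eold] at hold
    rw [enew]
    simp only [effb_append, effu_append] at hold ⊢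
    constructor
    · linarith [hold.1]
    · linarith [hold.2]
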